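/- If μ is a node labeling with values in L(T) ∪ {⊤} (T an ordered tree of height d/2) that is feasible in a cycle C of the game graph, then μ(v)|_{π(C)} = μ(w)|_{π(C)} for all nodes v, w on C, where π(C) is the maximum priority on C. Moreover, if μ(v) ≠ ⊤ for some v on C, then π(C) is even. -/

import Mathlib

/-- The `p`-truncation of a label: a leaf of an ordered tree of height `h` is an `h`-tuple
`(ξ_{2h-1}, ξ_{2h-3}, …, ξ_1)` (a list of length `h`, lexicographically ordered); the
`p`-truncation deletes the components with index `< p` (for odd `p`, index `< p`; for even
`p`, index `≤ p`), i.e. keeps the first `h - p/2` entries; and `⊤|_p = ⊤`. -/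
def trunc {M : Type*} (h p : ℕ) (x : WithTop (List M)) : WithTop (List M) :=
  WithTop.map (List.take (h - p / 2)) x

/-- The progress-measure condition for an arc with tail-priority `p`, tail label `x` and
head label `y` (labels in `L(T) ∪ {⊤}` for a tree `T` of height `h`): if `p` is even then
`x|_p ≥ y|_p`; if `p` is odd then `x|_p > y|_p` or both labels are `⊤`.  An arc whose
labels satisfy this condition is *non-violated*. -/
def NV {M : Type*} [LinearOrder M] (h p : ℕ) (x y : WithTop (List M)) : Prop :=
  if Even p then trunc h p y ≤ trunc h p x
  else trunc h p y < trunc h p x ∨ (x = ⊤ ∧ y = ⊤)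


lemma lex_take {M : Type*} [LinearOrder M] :
    ∀ (m : ℕ) {a b : List M}, List.Lex (· < ·) a b → a.take m ≤ b.take m := by
  intro m a b hab
  induction hab generalizing m with
  | nil =>
    simp only [List.take_nil]
    cases m with
    | zero => simp
    | succ k => exact le_of_lt List.Lex.nil
  | @cons a l1 l2 _ ih =>
    cases m with
    | zero => simp
    | succ k =>
      simp only [List.take_succ_cons]
      rcases lt_or_eq_of_le (ih k) with hlt | heq
      · exact le_of_lt (List.Lex.cons hlt)
      · rw [heq]
  | @rel a b l1 l2 hab =>
    cases m with
    | zero => simp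
    | succ k => exact le_of_lt (List.Lex.rel hab)

lemma take_le_take {M : Type*} [LinearOrder M] (m : ℕ) {a b : List M} (hab : a ≤ b) :
    a.take m ≤ b.take m := by
  rcases lt_or_eq_of_le hab with hlt | rfl
  · exact lex_take m hlt
  · exact le_rfl

lemma trunc_mono {M : Type*} [LinearOrder M] {h p P : ℕ} (hpP : p ≤ P)
    {x y : WithTop (List M)} (hxy : trunc h p y ≤ trunc h p x) :
    trunc h P y ≤ trunc h P x := by
  cases x with
  | top => exact le_top
  | coe lx =>
    cases y with
    | top =>
      exfalso
      simp only [trunc, WithTop.map_top, WithTop.map_coe, top_le_iff] at hxy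
      exact (WithTop.coe_ne_top hxy)
    | coe ly =>
      simp only [trunc, WithTop.map_coe, WithTop.coe_le_coe] at hxy ⊢
      have hm : h - P / 2 ≤ h - p / 2 :=
        Nat.sub_le_sub_left (Nat.div_le_div_right hpP) h
      have e1 : ly.take (h - P / 2) = (ly.take (h - p / 2)).take (h - P / 2) := by
        rw [List.take_take, min_eq_left hm]
      have e2 : lx.take (h - P / 2) = (lx.take (h - p / 2)).take (h - P / 2) := by
        rw [List.take_take, min_eq_left hm]
      rw [e1, e2]
      exact take_le_take _ hxy

/-- **Cycle Lemma.** Let `μ` be a node labeling with values in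
`L(T) ∪ {⊤}` for an ordered tree `T` of height `h = d/2` that is feasible in a cycle
`c 0 → c 1 → ⋯ → c n → c 0` (every arc of the cycle is non-violated).  If `P` is the
maximum priority occurring on the cycle, then `μ(v)|_P = μ(w)|_P` for all nodes `v, w`
of the cycle; moreover, if `μ(v) ≠ ⊤` for some node of the cycle, then `P` is even. -/
theorem stmt_6 {V M : Type*} [LinearOrder M]
    (d h : ℕ) (hd : d = 2 * h)
    (π : V → ℕ) (hπ : ∀ v, 1 ≤ π v ∧ π v ≤ d)
    (μ : V → WithTop (List M))
    (hlen : ∀ (v : V) (ξ : List M), μ v = (ξ : WithTop (List M)) → ξ.length = h)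
    (n : ℕ) (c : Fin (n + 1) → V)
    (hfeas : ∀ i, NV h (π (c i)) (μ (c i)) (μ (c (i + 1))))
    (P : ℕ) (hub : ∀ i, π (c i) ≤ P) (hmem : ∃ i, π (c i) = P) :
    (∀ i j, trunc h P (μ (c i)) = trunc h P (μ (c j))) ∧
      ((∃ i, μ (c i) ≠ ⊤) → Even P) := by
  set f : Fin (n + 1) → WithTop (List M) := fun i => trunc h P (μ (c i)) with hf
  have hstep : ∀ i, f (i + 1) ≤ f i := by
    intro i
    have hnv := hfeas i
    unfold NV at hnv
    split_ifs at hnv with hpar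
    · exact trunc_mono (hub i) hnv
    · rcases hnv with hlt | ⟨hx, hy⟩
      · exact trunc_mono (hub i) (le_of_lt hlt)
      · simp only [hf, hx, hy]; exact le_rfl
  open Fin.NatCast Fin.CommRing in
  have hchain : ∀ (i : Fin (n + 1)) (k : ℕ), f (i + (k : Fin (n + 1))) ≤ f i := by
    intro i k
    induction k with
    | zero => simp
    | succ k ih =>
      have : (((k : ℕ) + 1 : ℕ) : Fin (n + 1)) = (k : Fin (n + 1)) + 1 := by
        push_cast; ring
      rw [this, ← add_assoc]
      exact le_trans (hstep (i + (k : Fin (n + 1)))) ih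
  open Fin.NatCast Fin.CommRing in
  have hle : ∀ i j : Fin (n + 1), f j ≤ f i := by
    intro i j
    have := hchain i ((j - i).val)
    rwa [Fin.cast_val_eq_self, add_sub_cancel] at this
  have hconst : ∀ i j, f i = f j := fun i j => le_antisymm (hle j i) (hle i j)
  refine ⟨hconst, ?_⟩
  rintro ⟨i0, hi0⟩
  by_contra hodd
  obtain ⟨j, hj⟩ := hmem
  have hnv := hfeas j
  unfold NV at hnv
  rw [hj, if_neg hodd] at hnv
  rcases hnv with hlt | ⟨hx, _⟩
  · have : f (j + 1) < f j := by rw [hf]; simpa [hj] using hlt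
    exact absurd (hconst j (j + 1)) (ne_of_gt this)
  · have : f j = ⊤ := by simp [hf, hx, trunc]
    have hi : f i0 = ⊤ := (hconst i0 j).trans this
    have : μ (c i0) = ⊤ := by
      cases hmu : μ (c i0) with
      | top => rfl
      | coe l => rw [hf] at hi; simp [trunc, hmu] at hi
    exact hi0 this
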